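/- For α = 2, the series ∑_{n=1}^∞ 1/∏_{k=0}^n (2k + 1) = ∑_{n=1}^∞ 1/(2n+1)!! equals √(eπ/2)·erf(1/√2) − 1. -/

import Mathlib

open Real MeasureTheory intervalIntegral Finset

/-- The error function `erf x = (2/√π) ∫_0^x exp (-t²) dt`. -/
noncomputable def erf (x : ℝ) : ℝ :=
  (2 / Real.sqrt Real.pi) * ∫ t in (0:ℝ)..x, Real.exp (-t ^ 2)

lemma cos_pow_odd_int (n : ℕ) :
    ∫ x in (0:ℝ)..(π/2), Real.cos x ^ (2*n+1) =
      ∏ i ∈ Finset.range n, ((2*(i:ℝ)+2)/(2*(i:ℝ)+3)) := by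
  induction n with
  | zero => simp
  | succ n ih =>
    have h : 2*(n+1)+1 = (2*n+1) + 2 := by ring
    rw [h, integral_cos_pow, ih, Finset.prod_range_succ]
    rw [Real.cos_pi_div_two, Real.sin_zero]
    push_cast
    ring

lemma one_sub_sq_int (n : ℕ) :
    ∫ u in (0:ℝ)..1, (1 - u^2)^n =
      ∏ i ∈ Finset.range n, ((2*(i:ℝ)+2)/(2*(i:ℝ)+3)) := by
  have := integral_sin_pow_mul_cos_pow_odd (a := 0) (b := π/2) 0 n
  simp only [pow_zero, one_mul, Real.sin_pi_div_two, Real.sin_zero] at this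
  rw [← this, cos_pow_odd_int]

lemma prod_eq (n : ℕ) :
    (∏ i ∈ Finset.range n, ((2*(i:ℝ)+2)/(2*(i:ℝ)+3))) =
      (2^n * n.factorial) / ∏ k ∈ Finset.range (n+1), (2 * (k : ℝ) + 1) := by
  rw [Finset.prod_div_distrib]
  congr 1
  · induction n with
    | zero => simp
    | succ n ih => rw [Finset.prod_range_succ, ih]; push_cast [Nat.factorial_succ]; ring
  · rw [Finset.prod_range_succ' (fun k => (2 * (k:ℝ) + 1))]
    push_cast
    simp [mul_add]
    exact Finset.prod_congr rfl fun _ _ => by ring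

/-- The family of functions whose integrals give `1/(2n+1)!!`. -/
noncomputable def F (n : ℕ) (u : ℝ) : ℝ := (1 - u^2)^n / (2^n * n.factorial)

lemma prod_pos (n : ℕ) : 0 < ∏ k ∈ Finset.range (n+1), (2 * (k : ℝ) + 1) :=
  Finset.prod_pos fun k _ => by positivity

lemma F_integral (n : ℕ) :
    ∫ u in Set.Ioc (0:ℝ) 1, F n u =
      1 / ∏ k ∈ Finset.range (n+1), (2 * (k : ℝ) + 1) := by
  rw [← intervalIntegral.integral_of_le (by norm_num : (0:ℝ) ≤ 1)]
  simp only [F, div_eq_mul_inv]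
  rw [intervalIntegral.integral_mul_const, one_sub_sq_int, prod_eq]
  have h1 : ((2:ℝ)^n * n.factorial) ≠ 0 := by positivity
  field_simp

lemma F_integrable (n : ℕ) : IntegrableOn (F n) (Set.Ioc (0:ℝ) 1) := by
  apply Continuous.integrableOn_Ioc
  unfold F
  fun_prop

lemma F_norm_integral_le (n : ℕ) :
    ∫ u in Set.Ioc (0:ℝ) 1, ‖F n u‖ ≤ (1/2)^n / n.factorial := by
  have h : ∀ u ∈ Set.Ioc (0:ℝ) 1, ‖F n u‖ ≤ (1/2)^n / n.factorial := by
    intro u hu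
    have h1 : 0 ≤ 1 - u^2 := by nlinarith [hu.1, hu.2]
    have h2 : 1 - u^2 ≤ 1 := by nlinarith [hu.1]
    simp only [F]
    rw [Real.norm_of_nonneg (div_nonneg (pow_nonneg h1 n) (by positivity))]
    rw [div_pow, one_pow, div_div]
    apply div_le_div_of_nonneg_right ?_ (by positivity) |>.trans_eq rfl
    · exact pow_le_one₀ h1 h2
  calc ∫ u in Set.Ioc (0:ℝ) 1, ‖F n u‖
      ≤ ∫ _u in Set.Ioc (0:ℝ) 1, ((1:ℝ)/2)^n / n.factorial := by
        apply setIntegral_mono_on (F_integrable n).norm (integrableOn_const (by simp))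
          measurableSet_Ioc h
    _ = (1/2)^n / n.factorial := by simp

lemma F_summable_norm :
    Summable fun n => ∫ u in Set.Ioc (0:ℝ) 1, ‖F n u‖ := by
  apply Summable.of_nonneg_of_le (fun n => integral_nonneg fun u => norm_nonneg _)
    F_norm_integral_le
  simpa using Real.summable_pow_div_factorial (1/2)

lemma F_tsum (u : ℝ) : ∑' n, F n u = Real.exp ((1 - u^2)/2) := by
  rw [Real.exp_eq_exp_ℝ, NormedSpace.exp_eq_tsum_div]
  refine tsum_congr fun n => ?_
  simp only [F]
  rw [div_pow, div_div]

lemma hasSum_S :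
    HasSum (fun n => (1:ℝ) / ∏ k ∈ Finset.range (n+1), (2 * (k : ℝ) + 1))
      (∫ u in Set.Ioc (0:ℝ) 1, Real.exp ((1 - u^2)/2)) := by
  have := MeasureTheory.hasSum_integral_of_summable_integral_norm
    (μ := volume.restrict (Set.Ioc (0:ℝ) 1)) F_integrable F_summable_norm
  simp only [F_integral, F_tsum] at this
  exact this

lemma exp_integral :
    (∫ u in Set.Ioc (0:ℝ) 1, Real.exp ((1 - u^2)/2)) =
      Real.exp (1/2) * (Real.sqrt 2 * ∫ t in (0:ℝ)..(1/Real.sqrt 2), Real.exp (-t^2)) := by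
  rw [← intervalIntegral.integral_of_le (by norm_num : (0:ℝ) ≤ 1)]
  have h2 : Real.sqrt 2 ≠ 0 := by positivity
  have hsq : (Real.sqrt 2)^2 = 2 := Real.sq_sqrt (by norm_num)
  have key : ∀ u : ℝ, Real.exp ((1 - u^2)/2) =
      Real.exp (1/2) * Real.exp (-(u / Real.sqrt 2)^2) := by
    intro u
    rw [← Real.exp_add, div_pow, hsq]
    ring_nf
  simp only [key]
  rw [intervalIntegral.integral_const_mul]
  congr 1
  rw [intervalIntegral.integral_comp_div (f := fun t => Real.exp (-t^2)) h2]
  simp [smul_eq_mul, zero_div]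

lemma coeff_eq : Real.sqrt (Real.exp 1 * Real.pi / 2) * (2 / Real.sqrt Real.pi) =
    Real.exp (1/2) * Real.sqrt 2 := by
  have he : Real.exp 1 = Real.exp (1/2) ^ 2 := by
    rw [sq, ← Real.exp_add]; norm_num
  have hpi : (0:ℝ) < π := Real.pi_pos
  rw [he, show Real.exp (1/2)^2 * π / 2 = (Real.exp (1/2))^2 * (π / 2) by ring,
    Real.sqrt_mul (by positivity), Real.sqrt_sq (Real.exp_pos _).le,
    show π / 2 = π / (Real.sqrt 2)^2 by rw [Real.sq_sqrt]; norm_num,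
    show π / (Real.sqrt 2)^2 = (Real.sqrt π / Real.sqrt 2)^2 by
      rw [div_pow, Real.sq_sqrt hpi.le]]
  rw [Real.sqrt_sq (by positivity)]
  have hπ : Real.sqrt π ≠ 0 := by positivity
  have h2 : Real.sqrt 2 ≠ 0 := by positivity
  have hm : Real.sqrt 2 * Real.sqrt 2 = 2 := Real.mul_self_sqrt (by norm_num)
  field_simp
  linear_combination (-1 : ℝ) * hm

theorem sum_inv_double_factorial :
    ∑' n : ℕ, (1 : ℝ) / ∏ k ∈ Finset.range (n + 2), (2 * (k : ℝ) + 1) =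
      Real.sqrt (Real.exp 1 * Real.pi / 2) * erf (1 / Real.sqrt 2) - 1 := by
  have hS := hasSum_S
  have hsum := hS.summable
  have htot := hS.tsum_eq
  rw [Summable.tsum_eq_zero_add hsum] at htot
  have h0 : (1:ℝ) / ∏ k ∈ Finset.range (0+1), (2 * (k : ℝ) + 1) = 1 := by simp
  rw [h0] at htot
  have h2 : ∑' (b : ℕ), (1:ℝ) / ∏ k ∈ Finset.range (b + 1 + 1), (2 * (k : ℝ) + 1)
      = ∑' n : ℕ, (1 : ℝ) / ∏ k ∈ Finset.range (n + 2), (2 * (k : ℝ) + 1) := by norm_num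
  rw [h2] at htot
  have : ∑' n : ℕ, (1 : ℝ) / ∏ k ∈ Finset.range (n + 2), (2 * (k : ℝ) + 1) =
      (∫ u in Set.Ioc (0:ℝ) 1, Real.exp ((1 - u^2)/2)) - 1 := by linarith
  rw [this, exp_integral, erf]
  rw [show Real.sqrt (Real.exp 1 * π / 2) * ((2 / Real.sqrt π) * ∫ t in (0:ℝ)..(1/Real.sqrt 2), Real.exp (-t^2)) =
    (Real.sqrt (Real.exp 1 * π / 2) * (2 / Real.sqrt π)) * ∫ t in (0:ℝ)..(1/Real.sqrt 2), Real.exp (-t^2) by ring,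
    coeff_eq]
  ring
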